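/- arXiv:2205.13814 — 3 statements merged into one kernel-verified Lean document; each statement's English description precedes it below -/
import Mathlib

section
/- Let φ denote the ReLU function applied entrywise. Suppose W ∈ ℝ^{m×m}, U ∈ ℝ^{m×d}, X ∈ ℝ^{d×n} satisfy ‖W‖₂ ≤ ρ̄_w < 1 and ‖U‖₂ ≤ ρ̄_u, and let Z ∈ ℝ^{m×n} be an equilibrium point, i.e. Z = φ(W Z + U X). Then ‖Z‖_F ≤ (ρ̄_u/(1 − ρ̄_w)) · ‖X‖_F. -/
open scoped BigOperators Matrix Kronecker
open MeasureTheory ProbabilityTheory Filter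

noncomputable section

/-- ReLU on reals. -/
def relu (x : ℝ) : ℝ := max x 0

/-- Entrywise ReLU on matrices. -/
def reluM {α β : Type*} (A : Matrix α β ℝ) : Matrix α β ℝ :=
  Matrix.of fun i j => relu (A i j)

/-- Frobenius norm of a matrix. -/
def frobNorm {α β : Type*} [Fintype α] [Fintype β] (A : Matrix α β ℝ) : ℝ :=
  Real.sqrt (∑ i, ∑ j, (A i j) ^ 2)

/-- Euclidean norm of a vector. -/
def euclNorm {α : Type*} [Fintype α] (v : α → ℝ) : ℝ :=
  Real.sqrt (∑ i, (v i) ^ 2)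

/-- Operator (spectral) norm of a real matrix. -/
def opNorm {α β : Type*} [Fintype α] [Fintype β] [DecidableEq β]
    (A : Matrix α β ℝ) : ℝ :=
  ‖(LinearMap.toContinuousLinearMap (Matrix.toEuclideanLin A))‖

/-- Least eigenvalue of a square matrix, as the infimum of the Rayleigh
quotient over the unit sphere. -/
def lamMin {n : ℕ} (A : Matrix (Fin n) (Fin n) ℝ) : ℝ :=
  ⨅ v : {v : Fin n → ℝ // ∑ i, (v i) ^ 2 = 1}, ∑ i, A.mulVec v.1 i * v.1 i

/-- The dual activation `Q(x) = (√(1-x²) + (π - arccos x)·x)/π` of ReLU. -/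
def Qf (x : ℝ) : ℝ := (Real.sqrt (1 - x ^ 2) + (Real.pi - Real.arccos x) * x) / Real.pi

/-- Expectation of `φ(u)·φ(v)` for `(u,v)` a centered Gaussian vector with
covariance `[[a, c], [c, b]]`, written via the representation `u = √a·g₁`,
`v = (c/√a)·g₁ + √(b - c²/a)·g₂` with `g₁, g₂` i.i.d. standard Gaussians. -/
def gaussRelu2 (a b c : ℝ) : ℝ :=
  ∫ p : ℝ × ℝ, relu (Real.sqrt a * p.1) *
      relu (c / Real.sqrt a * p.1 + Real.sqrt (b - c ^ 2 / a) * p.2)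
    ∂((gaussianReal 0 1).prod (gaussianReal 0 1))

/-- The population Gram matrices `K^{(l)}`, defined recursively from the
pairwise input correlations `c i j = xᵢᵀxⱼ/d`:  `K^{(0)} = 0` and
`K^{(l)}_{ij} = 2·E[φ(u)φ(v)]` for `(u,v) ~ N(0, Λ^{(l)}_{ij})`. -/
def popGram {n : ℕ} (sw2 : ℝ) (c : Fin n → Fin n → ℝ) : ℕ → Matrix (Fin n) (Fin n) ℝ
  | 0 => 0
  | l + 1 => Matrix.of fun i j =>
      2 * gaussRelu2 (sw2 * popGram sw2 c l i i + 1) (sw2 * popGram sw2 c l j j + 1)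
        (sw2 * popGram sw2 c l i j + c i j)

/-- The iterates `Z^{(0)} = 0`, `Z^{(l+1)} = φ(W Z^{(l)} + U X)`. -/
def Zit {m d n : ℕ} (W : Matrix (Fin m) (Fin m) ℝ) (U : Matrix (Fin m) (Fin d) ℝ)
    (X : Matrix (Fin d) (Fin n) ℝ) : ℕ → Matrix (Fin m) (Fin n) ℝ
  | 0 => 0
  | l + 1 => reluM (W * Zit W U X l + U * X)

end

noncomputable section

lemma opNorm_nonneg {α β : Type*} [Fintype α] [Fintype β] [DecidableEq β]
    (A : Matrix α β ℝ) : 0 ≤ opNorm A := norm_nonneg _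

lemma mulVec_sq_le {a b : ℕ} (A : Matrix (Fin a) (Fin b) ℝ) (v : Fin b → ℝ) :
    ∑ i, (A.mulVec v i) ^ 2 ≤ (opNorm A) ^ 2 * ∑ i, (v i) ^ 2 := by
  have h := (LinearMap.toContinuousLinearMap (Matrix.toEuclideanLin A)).le_opNorm
    ((WithLp.equiv 2 (Fin b → ℝ)).symm v)
  have hnv : ‖(WithLp.equiv 2 (Fin b → ℝ)).symm v‖ = Real.sqrt (∑ i, (v i) ^ 2) := by
    rw [EuclideanSpace.norm_eq]
    simp [Real.norm_eq_abs, sq_abs]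
  have happ : (LinearMap.toContinuousLinearMap (Matrix.toEuclideanLin A))
      ((WithLp.equiv 2 (Fin b → ℝ)).symm v) = (WithLp.equiv 2 (Fin a → ℝ)).symm (A.mulVec v) := rfl
  rw [happ, hnv] at h
  have hn2 : ‖(WithLp.equiv 2 (Fin a → ℝ)).symm (A.mulVec v)‖
      = Real.sqrt (∑ i, (A.mulVec v i) ^ 2) := by
    rw [EuclideanSpace.norm_eq]
    simp [Real.norm_eq_abs, sq_abs]
  rw [hn2] at h
  have h2 := mul_self_le_mul_self (Real.sqrt_nonneg _) h
  calc ∑ i, (A.mulVec v i) ^ 2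
      = Real.sqrt (∑ i, (A.mulVec v i) ^ 2) * Real.sqrt (∑ i, (A.mulVec v i) ^ 2) := by
        rw [Real.mul_self_sqrt (Finset.sum_nonneg fun i _ => sq_nonneg _)]
    _ ≤ (opNorm A * Real.sqrt (∑ i, (v i)^2)) * (opNorm A * Real.sqrt (∑ i, (v i)^2)) := h2
    _ = (opNorm A) ^ 2 * ∑ i, (v i) ^ 2 := by
        rw [mul_mul_mul_comm, ← sq, ← sq, Real.sq_sqrt (Finset.sum_nonneg fun i _ => sq_nonneg (v i))]

lemma frobNorm_mul_le {a b c : ℕ} (M : Matrix (Fin a) (Fin b) ℝ) (A : Matrix (Fin b) (Fin c) ℝ) :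
    frobNorm (M * A) ≤ opNorm M * frobNorm A := by
  unfold frobNorm
  rw [← Real.sqrt_sq (opNorm_nonneg M), ← Real.sqrt_mul (sq_nonneg _)]
  apply Real.sqrt_le_sqrt
  have : ∀ j, ∑ i, ((M * A) i j) ^ 2 ≤ (opNorm M) ^ 2 * ∑ i, (A i j) ^ 2 := by
    intro j
    have := mulVec_sq_le M (fun k => A k j)
    simpa [Matrix.mulVec, Matrix.mul_apply, dotProduct] using this
  calc ∑ i, ∑ j, ((M * A) i j) ^ 2 = ∑ j, ∑ i, ((M * A) i j) ^ 2 := Finset.sum_comm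
    _ ≤ ∑ j, (opNorm M) ^ 2 * ∑ i, (A i j) ^ 2 := Finset.sum_le_sum fun j _ => this j
    _ = (opNorm M) ^ 2 * ∑ i, ∑ j, (A i j) ^ 2 := by rw [← Finset.mul_sum, Finset.sum_comm]

lemma frobNorm_add_le {a b : ℕ} (A B : Matrix (Fin a) (Fin b) ℝ) :
    frobNorm (A + B) ≤ frobNorm A + frobNorm B := by
  have key : ∀ C : Matrix (Fin a) (Fin b) ℝ,
      frobNorm C = ‖(WithLp.equiv 2 (Fin a × Fin b → ℝ)).symm (fun p => C p.1 p.2)‖ := by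
    intro C
    rw [EuclideanSpace.norm_eq, frobNorm]
    congr 1
    simp [Fintype.sum_prod_type, Real.norm_eq_abs, sq_abs]
  rw [key, key, key]
  have : (fun p : Fin a × Fin b => (A + B) p.1 p.2) = (fun p => A p.1 p.2) + (fun p => B p.1 p.2) := by
    ext p; simp [Matrix.add_apply]
  rw [this]
  calc _ = ‖(WithLp.equiv 2 (Fin a × Fin b → ℝ)).symm (fun p => A p.1 p.2)
        + (WithLp.equiv 2 (Fin a × Fin b → ℝ)).symm (fun p => B p.1 p.2)‖ := rfl
    _ ≤ _ := norm_add_le _ _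

lemma frobNorm_relu_le {a b : ℕ} (A : Matrix (Fin a) (Fin b) ℝ) :
    frobNorm (reluM A) ≤ frobNorm A := by
  apply Real.sqrt_le_sqrt
  apply Finset.sum_le_sum; intro i _; apply Finset.sum_le_sum; intro j _
  have : |reluM A i j| ≤ |A i j| := by
    simp only [reluM, Matrix.of_apply, relu]
    rw [abs_of_nonneg (le_max_right _ _)]
    exact max_le (le_abs_self _) (abs_nonneg _)
  calc (reluM A i j)^2 = |reluM A i j|^2 := (sq_abs _).symm
    _ ≤ |A i j|^2 := by apply pow_le_pow_left₀ (abs_nonneg _) this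
    _ = (A i j)^2 := sq_abs _

/-- an equilibrium point `Z = φ(W Z + U X)` with `‖W‖₂ ≤ ρ̄_w < 1`
and `‖U‖₂ ≤ ρ̄_u` satisfies `‖Z‖_F ≤ (ρ̄_u/(1-ρ̄_w))·‖X‖_F`. -/
theorem equilibrium_frobenius_bound {m d n : ℕ}
    (W : Matrix (Fin m) (Fin m) ℝ) (U : Matrix (Fin m) (Fin d) ℝ)
    (X : Matrix (Fin d) (Fin n) ℝ) (ρw ρu : ℝ)
    (hW : opNorm W ≤ ρw) (hρw : ρw < 1) (hU : opNorm U ≤ ρu)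
    (Z : Matrix (Fin m) (Fin n) ℝ) (hZ : Z = reluM (W * Z + U * X)) :
    frobNorm Z ≤ ρu / (1 - ρw) * frobNorm X := by
  have fZ0 : 0 ≤ frobNorm Z := Real.sqrt_nonneg _
  have fX0 : 0 ≤ frobNorm X := Real.sqrt_nonneg _
  have key : frobNorm Z ≤ ρw * frobNorm Z + ρu * frobNorm X := by
    calc frobNorm Z = frobNorm (reluM (W * Z + U * X)) := by rw [← hZ]
      _ ≤ frobNorm (W * Z + U * X) := frobNorm_relu_le _
      _ ≤ frobNorm (W * Z) + frobNorm (U * X) := frobNorm_add_le _ _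
      _ ≤ opNorm W * frobNorm Z + opNorm U * frobNorm X :=
          add_le_add (frobNorm_mul_le _ _) (frobNorm_mul_le _ _)
      _ ≤ ρw * frobNorm Z + ρu * frobNorm X :=
          add_le_add (mul_le_mul_of_nonneg_right hW fZ0) (mul_le_mul_of_nonneg_right hU fX0)
  rw [div_mul_eq_mul_div, le_div_iff₀ (by linarith)]
  nlinarith

end
end

section
/- Let φ denote the ReLU function applied entrywise. Suppose W ∈ ℝ^{m×m}, U ∈ ℝ^{m×d}, a ∈ ℝ^m, X ∈ ℝ^{d×n}, y ∈ ℝⁿ satisfy ‖W‖₂ ≤ ρ̄_w < 1, ‖U‖₂ ≤ ρ̄_u, ‖a‖₂ ≤ ρ̄_a. Let Z = φ(W Z + U X) be an equilibrium point, set ŷ = Zᵀa, let D ∈ ℝ^{mn×mn} be the diagonal matrix of entrywise indicators 1{W Z + U X ≥ 0} of vec(W Z + U X), J = I_{mn} − D(I_n ⊗ W), and R = (aᵀ ⊗ I_n) J^{-1} D. Define c_w = ρ̄_u ρ̄_a/(1−ρ̄_w)², c_u = ρ̄_a/(1−ρ̄_w), c_a = ρ̄_u/(1−ρ̄_w). Then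 ‖(Z ⊗ I_m) Rᵀ(ŷ − y)‖₂ ≤ c_w ‖X‖_F ‖ŷ − y‖₂, ‖(X ⊗ I_m) Rᵀ(ŷ − y)‖₂ ≤ c_u ‖X‖_F ‖ŷ − y‖₂, and ‖Z(ŷ − y)‖₂ ≤ c_a ‖X‖_F ‖ŷ − y‖₂. -/
open scoped BigOperators Matrix Kronecker
open MeasureTheory ProbabilityTheory Filter

noncomputable section
namespace GNB
variable {α β γ : Type*} [Fintype α] [Fintype β] [Fintype γ]

lemma euclNorm_eq (v : α → ℝ) : euclNorm v = ‖(WithLp.equiv 2 (α → ℝ)).symm v‖ := by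
  rw [euclNorm, EuclideanSpace.norm_eq]
  congr 1
  refine Finset.sum_congr rfl fun i _ => ?_
  show v i ^ 2 = ‖v i‖ ^ 2
  rw [Real.norm_eq_abs, sq_abs]

lemma euclNorm_nonneg (v : α → ℝ) : 0 ≤ euclNorm v := Real.sqrt_nonneg _

lemma euclNorm_sq (v : α → ℝ) : euclNorm v ^ 2 = ∑ i, (v i) ^ 2 :=
  Real.sq_sqrt (Finset.sum_nonneg fun _ _ => sq_nonneg _)

lemma euclNorm_eq_zero {v : α → ℝ} (h : euclNorm v = 0) : v = 0 := by
  rw [euclNorm_eq] at h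
  have h2 := norm_eq_zero.mp h
  have h3 := congrArg (WithLp.equiv 2 (α → ℝ)) h2
  simpa using h3

lemma euclNorm_add_le (v w : α → ℝ) : euclNorm (v + w) ≤ euclNorm v + euclNorm w := by
  rw [euclNorm_eq, euclNorm_eq, euclNorm_eq, WithLp.equiv_symm_apply, WithLp.toLp_add]
  exact norm_add_le _ _

lemma opNorm_mulVec [DecidableEq β] (A : Matrix α β ℝ) (v : β → ℝ) :
    euclNorm (A.mulVec v) ≤ opNorm A * euclNorm v := by
  rw [euclNorm_eq, euclNorm_eq, opNorm]
  have h := (LinearMap.toContinuousLinearMap (Matrix.toEuclideanLin A)).le_opNorm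
      ((WithLp.equiv 2 (β → ℝ)).symm v)
  simpa using h

lemma opNorm_nonneg [DecidableEq β] (A : Matrix α β ℝ) : 0 ≤ opNorm A := norm_nonneg _

lemma dotProduct_le (f g : α → ℝ) : f ⬝ᵥ g ≤ euclNorm f * euclNorm g := by
  have h := Finset.sum_mul_sq_le_sq_mul_sq Finset.univ f g
  have h2 : f ⬝ᵥ g ≤ Real.sqrt ((∑ i, f i ^ 2) * ∑ i, g i ^ 2) := by
    have h3 := Real.sqrt_le_sqrt h
    calc f ⬝ᵥ g ≤ |∑ i, f i * g i| := le_abs_self _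
    _ = Real.sqrt ((∑ i, f i * g i) ^ 2) := (Real.sqrt_sq_eq_abs _).symm
    _ ≤ _ := h3
  rw [Real.sqrt_mul (Finset.sum_nonneg fun _ _ => sq_nonneg _)] at h2
  exact h2

lemma transpose_mulVec_le [DecidableEq α] [DecidableEq β] (W : Matrix α β ℝ) (x : α → ℝ) :
    euclNorm (Wᵀ.mulVec x) ≤ opNorm W * euclNorm x := by
  set u := Wᵀ.mulVec x with hu
  set t := euclNorm u with ht
  have ht0 : 0 ≤ t := euclNorm_nonneg _
  rcases eq_or_lt_of_le ht0 with h0 | h0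
  · rw [← h0]; exact mul_nonneg (opNorm_nonneg _) (euclNorm_nonneg _)
  have key : t ^ 2 ≤ opNorm W * euclNorm x * t := by
    have h1 : t ^ 2 = u ⬝ᵥ u := by
      rw [ht, euclNorm_sq, dotProduct]
      exact Finset.sum_congr rfl fun i _ => by ring
    have h2 : u ⬝ᵥ u = (W.mulVec u) ⬝ᵥ x := by
      rw [hu, Matrix.dotProduct_mulVec, Matrix.vecMul_transpose]
    calc t ^ 2 = (W.mulVec u) ⬝ᵥ x := by rw [h1, h2]
    _ ≤ euclNorm (W.mulVec u) * euclNorm x := dotProduct_le _ _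
    _ ≤ (opNorm W * t) * euclNorm x :=
        mul_le_mul_of_nonneg_right (opNorm_mulVec W u) (euclNorm_nonneg _)
    _ = opNorm W * euclNorm x * t := by ring
  exact le_of_mul_le_mul_right (by nlinarith [key] : t * t ≤ (opNorm W * euclNorm x) * t) h0

lemma frobNorm_nonneg (A : Matrix α β ℝ) : 0 ≤ frobNorm A := Real.sqrt_nonneg _

lemma sqrt_le_mul_sqrt {s a v : ℝ} (ha : 0 ≤ a) (h : s ≤ a ^ 2 * v) :
    Real.sqrt s ≤ a * Real.sqrt v := by
  have h2 := Real.sqrt_le_sqrt h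
  rwa [Real.sqrt_mul (by positivity), Real.sqrt_sq ha] at h2

lemma frob_mulVec (A : Matrix α β ℝ) (v : β → ℝ) :
    euclNorm (A.mulVec v) ≤ frobNorm A * euclNorm v := by
  rw [euclNorm, frobNorm, euclNorm]
  refine sqrt_le_mul_sqrt (Real.sqrt_nonneg _) ?_
  rw [Real.sq_sqrt (Finset.sum_nonneg fun i _ => Finset.sum_nonneg fun j _ => sq_nonneg (A i j)),
    Finset.sum_mul]
  exact Finset.sum_le_sum fun i _ => Finset.sum_mul_sq_le_sq_mul_sq Finset.univ _ _

lemma kron_one_mulVec_le [DecidableEq γ] (A : Matrix α β ℝ) (w : β × γ → ℝ) :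
    euclNorm ((A ⊗ₖ (1 : Matrix γ γ ℝ)).mulVec w) ≤ frobNorm A * euclNorm w := by
  have hentry : ∀ i c, (A ⊗ₖ (1 : Matrix γ γ ℝ)).mulVec w (i, c) = ∑ j, A i j * w (j, c) := by
    intro i c
    rw [Matrix.mulVec, dotProduct, Fintype.sum_prod_type]
    refine Finset.sum_congr rfl fun j _ => ?_
    rw [Finset.sum_eq_single c]
    · simp [Matrix.kroneckerMap_apply]
    · intro d _ hd
      simp [Matrix.kroneckerMap_apply, Matrix.one_apply, Ne.symm hd]
    · simp
  rw [euclNorm, frobNorm, euclNorm]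
  refine sqrt_le_mul_sqrt (Real.sqrt_nonneg _) ?_
  rw [Real.sq_sqrt (Finset.sum_nonneg fun i _ => Finset.sum_nonneg fun j _ => sq_nonneg (A i j))]
  rw [Fintype.sum_prod_type]
  calc ∑ i, ∑ c, ((A ⊗ₖ (1 : Matrix γ γ ℝ)).mulVec w (i, c)) ^ 2
      ≤ ∑ i, ∑ c, (∑ j, A i j ^ 2) * (∑ j, w (j, c) ^ 2) := by
        refine Finset.sum_le_sum fun i _ => Finset.sum_le_sum fun c _ => ?_
        rw [hentry]
        exact Finset.sum_mul_sq_le_sq_mul_sq Finset.univ _ _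
    _ = (∑ i, ∑ j, A i j ^ 2) * ∑ p : β × γ, w p ^ 2 := by
        rw [Fintype.sum_prod_type, Finset.sum_mul]
        refine Finset.sum_congr rfl fun i _ => ?_
        rw [← Finset.mul_sum, Finset.sum_comm]

omit [Fintype α] in
lemma one_kron_mulVec_le {C : ℝ} (hC : 0 ≤ C) [DecidableEq β]
    (W : Matrix γ γ ℝ) [DecidableEq γ]
    (hW : ∀ x : γ → ℝ, euclNorm (W.mulVec x) ≤ C * euclNorm x) (v : β × γ → ℝ) :
    euclNorm (((1 : Matrix β β ℝ) ⊗ₖ W).mulVec v) ≤ C * euclNorm v := by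
  have hentry : ∀ (j : β) (i : γ), ((1 : Matrix β β ℝ) ⊗ₖ W).mulVec v (j, i)
      = W.mulVec (fun i' => v (j, i')) i := by
    intro j i
    rw [Matrix.mulVec, dotProduct, Fintype.sum_prod_type]
    rw [Finset.sum_eq_single j]
    · simp [Matrix.kroneckerMap_apply, Matrix.mulVec, dotProduct]
    · intro b _ hb
      simp [Matrix.kroneckerMap_apply, Matrix.one_apply, Ne.symm hb]
    · simp
  rw [euclNorm, euclNorm]
  refine sqrt_le_mul_sqrt hC ?_
  rw [Fintype.sum_prod_type, Fintype.sum_prod_type, Finset.mul_sum]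
  refine Finset.sum_le_sum fun j _ => ?_
  have h1 : ∑ i, (((1 : Matrix β β ℝ) ⊗ₖ W).mulVec v (j, i)) ^ 2
      = euclNorm (W.mulVec (fun i' => v (j, i'))) ^ 2 := by
    rw [euclNorm_sq]
    exact Finset.sum_congr rfl fun i _ => by rw [hentry]
  rw [h1]
  calc euclNorm (W.mulVec (fun i' => v (j, i'))) ^ 2
      ≤ (C * euclNorm (fun i' => v (j, i'))) ^ 2 :=
        pow_le_pow_left₀ (euclNorm_nonneg _) (hW _) 2
    _ = C ^ 2 * ∑ i, v (j, i) ^ 2 := by rw [mul_pow, euclNorm_sq]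

omit [Fintype β] [Fintype γ] in
lemma diag_mulVec_le (d : α → ℝ) (hd : ∀ p, d p = 1 ∨ d p = 0) (w : α → ℝ) [DecidableEq α] :
    euclNorm ((Matrix.diagonal d).mulVec w) ≤ euclNorm w := by
  rw [euclNorm, euclNorm]
  refine Real.sqrt_le_sqrt (Finset.sum_le_sum fun p _ => ?_)
  rw [Matrix.mulVec_diagonal]
  rcases hd p with h | h <;> rw [h] <;> simp [sq_nonneg]

lemma frob_relu_le (A : Matrix α β ℝ) : frobNorm (reluM A) ≤ frobNorm A := by
  rw [frobNorm, frobNorm]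
  refine Real.sqrt_le_sqrt (Finset.sum_le_sum fun i _ => Finset.sum_le_sum fun j _ => ?_)
  have h1 : |reluM A i j| ≤ |A i j| := by
    have h0 : reluM A i j = max (A i j) 0 := rfl
    rw [h0]
    rcases le_or_gt (A i j) 0 with h | h
    · rw [max_eq_right h]; simp [abs_nonneg]
    · rw [max_eq_left h.le]
  calc (reluM A i j) ^ 2 = |reluM A i j| ^ 2 := (sq_abs _).symm
    _ ≤ |A i j| ^ 2 := pow_le_pow_left₀ (abs_nonneg _) h1 2
    _ = (A i j) ^ 2 := sq_abs _

lemma frobNorm_eq (A : Matrix α β ℝ) : frobNorm A = euclNorm (fun p : α × β => A p.1 p.2) := by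
  rw [frobNorm, euclNorm, Fintype.sum_prod_type]

lemma frob_add_le (A B : Matrix α β ℝ) : frobNorm (A + B) ≤ frobNorm A + frobNorm B := by
  rw [frobNorm_eq, frobNorm_eq, frobNorm_eq]
  have h := euclNorm_add_le (fun p : α × β => A p.1 p.2) (fun p : α × β => B p.1 p.2)
  exact h

lemma frob_mul_le [DecidableEq β] (W : Matrix α β ℝ) (Z : Matrix β γ ℝ) :
    frobNorm (W * Z) ≤ opNorm W * frobNorm Z := by
  rw [frobNorm, frobNorm]
  refine sqrt_le_mul_sqrt (opNorm_nonneg _) ?_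
  have hL : (∑ i : α, ∑ j : γ, ((W * Z) i j) ^ 2) = ∑ j : γ, ∑ i : α, ((W * Z) i j) ^ 2 :=
    Finset.sum_comm
  have hv : (∑ i : β, ∑ j : γ, (Z i j) ^ 2) = ∑ j : γ, ∑ i : β, (Z i j) ^ 2 := Finset.sum_comm
  rw [hL, hv, Finset.mul_sum]
  refine Finset.sum_le_sum fun j _ => ?_
  · have h1 : ∑ i, ((W * Z) i j) ^ 2 = euclNorm (W.mulVec (fun k => Z k j)) ^ 2 := by
      rw [euclNorm_sq]
      refine Finset.sum_congr rfl fun i _ => ?_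
      rw [Matrix.mul_apply, Matrix.mulVec, dotProduct]
    rw [h1]
    calc euclNorm (W.mulVec (fun k => Z k j)) ^ 2
        ≤ (opNorm W * euclNorm (fun k => Z k j)) ^ 2 :=
          pow_le_pow_left₀ (euclNorm_nonneg _) (opNorm_mulVec _ _) 2
      _ = opNorm W ^ 2 * ∑ k, Z k j ^ 2 := by rw [mul_pow, euclNorm_sq]

end GNB
end

noncomputable section

/-- bounds on the norms of the (implicitly differentiated)
gradients `vec(∇_W Φ) = (Z ⊗ I_m) Rᵀ(ŷ - y)`, `vec(∇_U Φ) = (X ⊗ I_m) Rᵀ(ŷ - y)`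
and `∇_a Φ = Z(ŷ - y)` of the quadratic loss of a ReLU DEQ. -/
theorem gradient_norm_bounds {m d n : ℕ}
    (W : Matrix (Fin m) (Fin m) ℝ) (U : Matrix (Fin m) (Fin d) ℝ) (a : Fin m → ℝ)
    (X : Matrix (Fin d) (Fin n) ℝ) (y : Fin n → ℝ) (ρw ρu ρa : ℝ)
    (hW : opNorm W ≤ ρw) (hρw : ρw < 1) (hU : opNorm U ≤ ρu) (ha : euclNorm a ≤ ρa)
    (Z : Matrix (Fin m) (Fin n) ℝ) (hZ : Z = reluM (W * Z + U * X))
    (yhat : Fin n → ℝ) (hyhat : yhat = Zᵀ.mulVec a)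
    (D : Matrix (Fin n × Fin m) (Fin n × Fin m) ℝ)
    (hD : D = Matrix.diagonal fun p => if 0 ≤ (W * Z + U * X) p.2 p.1 then (1 : ℝ) else 0)
    (J : Matrix (Fin n × Fin m) (Fin n × Fin m) ℝ)
    (hJ : J = 1 - D * ((1 : Matrix (Fin n) (Fin n) ℝ) ⊗ₖ W))
    (R : Matrix (Fin n) (Fin n × Fin m) ℝ)
    (hR : R = (Matrix.of fun j p => if p.1 = j then a p.2 else 0 :
        Matrix (Fin n) (Fin n × Fin m) ℝ) * J⁻¹ * D)
    (cw cu ca : ℝ) (hcw : cw = ρu * ρa / (1 - ρw) ^ 2)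
    (hcu : cu = ρa / (1 - ρw)) (hca : ca = ρu / (1 - ρw)) :
    euclNorm ((Z ⊗ₖ (1 : Matrix (Fin m) (Fin m) ℝ)).mulVec (Rᵀ.mulVec (yhat - y))) ≤
        cw * frobNorm X * euclNorm (yhat - y) ∧
      euclNorm ((X ⊗ₖ (1 : Matrix (Fin m) (Fin m) ℝ)).mulVec (Rᵀ.mulVec (yhat - y))) ≤
        cu * frobNorm X * euclNorm (yhat - y) ∧
      euclNorm (Z.mulVec (yhat - y)) ≤ ca * frobNorm X * euclNorm (yhat - y) := by
  classical
  have hρw0 : 0 ≤ ρw := le_trans (GNB.opNorm_nonneg W) hW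
  have hρu0 : 0 ≤ ρu := le_trans (GNB.opNorm_nonneg U) hU
  have hρa0 : 0 ≤ ρa := le_trans (GNB.euclNorm_nonneg a) ha
  have hs : 0 < 1 - ρw := by linarith
  set e : Fin n → ℝ := yhat - y with he
  -- basic mulVec bounds
  have hWv : ∀ x : Fin m → ℝ, euclNorm (W.mulVec x) ≤ ρw * euclNorm x := fun x =>
    (GNB.opNorm_mulVec W x).trans (mul_le_mul_of_nonneg_right hW (GNB.euclNorm_nonneg _))
  have hWTv : ∀ x : Fin m → ℝ, euclNorm (Wᵀ.mulVec x) ≤ ρw * euclNorm x := fun x =>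
    (GNB.transpose_mulVec_le W x).trans (mul_le_mul_of_nonneg_right hW (GNB.euclNorm_nonneg _))
  have hd : ∀ p : Fin n × Fin m,
      (if 0 ≤ (W * Z + U * X) p.2 p.1 then (1 : ℝ) else 0) = 1 ∨
      (if 0 ≤ (W * Z + U * X) p.2 p.1 then (1 : ℝ) else 0) = 0 := by
    intro p; split <;> simp
  have hDv : ∀ w : Fin n × Fin m → ℝ, euclNorm (D.mulVec w) ≤ euclNorm w := by
    intro w; rw [hD]; exact GNB.diag_mulVec_le _ hd w
  -- the contraction M
  set M : Matrix (Fin n × Fin m) (Fin n × Fin m) ℝ :=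
    D * ((1 : Matrix (Fin n) (Fin n) ℝ) ⊗ₖ W) with hM
  have hMv : ∀ u : Fin n × Fin m → ℝ, euclNorm (M.mulVec u) ≤ ρw * euclNorm u := by
    intro u
    rw [hM, ← Matrix.mulVec_mulVec]
    calc euclNorm (D.mulVec (((1 : Matrix (Fin n) (Fin n) ℝ) ⊗ₖ W).mulVec u))
        ≤ euclNorm (((1 : Matrix (Fin n) (Fin n) ℝ) ⊗ₖ W).mulVec u) := hDv _
      _ ≤ ρw * euclNorm u := GNB.one_kron_mulVec_le hρw0 W hWv u
  have hMT : Mᵀ = ((1 : Matrix (Fin n) (Fin n) ℝ) ⊗ₖ Wᵀ) * Dᵀ := by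
    rw [hM, Matrix.transpose_mul]
    congr 1
    rw [← Matrix.kroneckerMap_transpose, Matrix.transpose_one]
  have hDT : Dᵀ = D := by rw [hD, Matrix.diagonal_transpose]
  have hMTv : ∀ u : Fin n × Fin m → ℝ, euclNorm (Mᵀ.mulVec u) ≤ ρw * euclNorm u := by
    intro u
    rw [hMT, hDT, ← Matrix.mulVec_mulVec]
    calc euclNorm (((1 : Matrix (Fin n) (Fin n) ℝ) ⊗ₖ Wᵀ).mulVec (D.mulVec u))
        ≤ ρw * euclNorm (D.mulVec u) := GNB.one_kron_mulVec_le hρw0 Wᵀ hWTv _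
      _ ≤ ρw * euclNorm u := mul_le_mul_of_nonneg_left (hDv u) hρw0
  -- invertibility of J
  have hvz : ∀ u : Fin n × Fin m → ℝ, J.mulVec u = 0 → u = 0 := by
    intro u h0
    rw [hJ, Matrix.sub_mulVec, Matrix.one_mulVec, sub_eq_zero] at h0
    have h1 := hMv u
    rw [← h0] at h1
    have h2 := GNB.euclNorm_nonneg u
    have h3 : euclNorm u = 0 := by nlinarith
    exact GNB.euclNorm_eq_zero h3
  have hinj : Function.Injective J.mulVec := by
    intro x y hxy
    have h4 := hvz (x - y) (by rw [Matrix.mulVec_sub, hxy, sub_self])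
    exact sub_eq_zero.mp h4
  have hJdet : IsUnit J.det :=
    (Matrix.isUnit_iff_isUnit_det J).mp (Matrix.mulVec_injective_iff_isUnit.mp hinj)
  have hJinv : J⁻¹ * J = 1 := Matrix.nonsing_inv_mul J hJdet
  have hJT : Jᵀ * (J⁻¹)ᵀ = 1 := by
    rw [← Matrix.transpose_mul, hJinv, Matrix.transpose_one]
  -- bound on (J⁻¹)ᵀ
  have hJinvT : ∀ w : Fin n × Fin m → ℝ,
      euclNorm ((J⁻¹)ᵀ.mulVec w) ≤ euclNorm w / (1 - ρw) := by
    intro w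
    set v := (J⁻¹)ᵀ.mulVec w with hv
    have hw : Jᵀ.mulVec v = w := by
      rw [hv, Matrix.mulVec_mulVec, hJT, Matrix.one_mulVec]
    have hveq : v = w + Mᵀ.mulVec v := by
      rw [hJ, Matrix.transpose_sub, Matrix.transpose_one, Matrix.sub_mulVec,
        Matrix.one_mulVec] at hw
      rw [← hw]
      abel
    have h5 : euclNorm v ≤ euclNorm w + ρw * euclNorm v := by
      calc euclNorm v = euclNorm (w + Mᵀ.mulVec v) := by rw [← hveq]
        _ ≤ euclNorm w + euclNorm (Mᵀ.mulVec v) := GNB.euclNorm_add_le _ _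
        _ ≤ euclNorm w + ρw * euclNorm v := by
            exact add_le_add_right (hMTv v) _
    rw [le_div_iff₀ hs]
    nlinarith [GNB.euclNorm_nonneg v, GNB.euclNorm_nonneg w]
  -- the selection matrix
  set A0 : Matrix (Fin n) (Fin n × Fin m) ℝ :=
    (Matrix.of fun j p => if p.1 = j then a p.2 else 0) with hA0
  have hA0T : ∀ q : Fin n × Fin m, A0ᵀ.mulVec e q = a q.2 * e q.1 := by
    intro q
    rw [Matrix.mulVec, dotProduct]
    rw [Finset.sum_eq_single q.1]
    · simp [hA0, Matrix.transpose_apply]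
    · intro k _ hk
      simp [hA0, Matrix.transpose_apply, Ne.symm hk]
    · simp
  have hA0e : euclNorm (A0ᵀ.mulVec e) ≤ ρa * euclNorm e := by
    have h6 : euclNorm (A0ᵀ.mulVec e) = euclNorm a * euclNorm e := by
      rw [euclNorm, euclNorm, euclNorm, ← Real.sqrt_mul
        (Finset.sum_nonneg fun _ _ => sq_nonneg _)]
      congr 1
      rw [Fintype.sum_prod_type]
      calc ∑ j, ∑ i, (A0ᵀ.mulVec e (j, i)) ^ 2
          = ∑ j, ∑ i, (a i) ^ 2 * (e j) ^ 2 := by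
            refine Finset.sum_congr rfl fun j _ => Finset.sum_congr rfl fun i _ => ?_
            rw [hA0T (j, i)]; ring
        _ = (∑ i, (a i) ^ 2) * ∑ j, (e j) ^ 2 := by
            rw [Finset.mul_sum]
            exact Finset.sum_congr rfl fun j _ => (Finset.sum_mul _ _ _).symm
    rw [h6]
    exact mul_le_mul_of_nonneg_right ha (GNB.euclNorm_nonneg _)
  -- the full R-transpose bound
  have hRe : euclNorm (Rᵀ.mulVec e) ≤ ρa * euclNorm e / (1 - ρw) := by
    have hRT : Rᵀ.mulVec e = D.mulVec ((J⁻¹)ᵀ.mulVec (A0ᵀ.mulVec e)) := by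
      rw [hR, Matrix.transpose_mul, Matrix.transpose_mul, hDT,
        Matrix.mulVec_mulVec, Matrix.mulVec_mulVec, Matrix.mul_assoc]
    rw [hRT]
    calc euclNorm (D.mulVec ((J⁻¹)ᵀ.mulVec (A0ᵀ.mulVec e)))
        ≤ euclNorm ((J⁻¹)ᵀ.mulVec (A0ᵀ.mulVec e)) := hDv _
      _ ≤ euclNorm (A0ᵀ.mulVec e) / (1 - ρw) := hJinvT _
      _ ≤ ρa * euclNorm e / (1 - ρw) := by
          exact div_le_div_of_nonneg_right hA0e hs.le
  -- Frobenius bound on Z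
  have hZfrob : frobNorm Z ≤ ρu * frobNorm X / (1 - ρw) := by
    have h7 : frobNorm Z ≤ ρw * frobNorm Z + ρu * frobNorm X := by
      calc frobNorm Z = frobNorm (reluM (W * Z + U * X)) := by rw [← hZ]
        _ ≤ frobNorm (W * Z + U * X) := GNB.frob_relu_le _
        _ ≤ frobNorm (W * Z) + frobNorm (U * X) := GNB.frob_add_le _ _
        _ ≤ ρw * frobNorm Z + ρu * frobNorm X := by
            refine add_le_add ?_ ?_
            · exact (GNB.frob_mul_le W Z).trans
                (mul_le_mul_of_nonneg_right hW (GNB.frobNorm_nonneg _))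
            · exact (GNB.frob_mul_le U X).trans
                (mul_le_mul_of_nonneg_right hU (GNB.frobNorm_nonneg _))
    rw [le_div_iff₀ hs]
    nlinarith [GNB.frobNorm_nonneg Z, GNB.frobNorm_nonneg X]
  have hXf : 0 ≤ frobNorm X := GNB.frobNorm_nonneg X
  have hef : 0 ≤ euclNorm e := GNB.euclNorm_nonneg e
  refine ⟨?_, ?_, ?_⟩
  · calc euclNorm ((Z ⊗ₖ (1 : Matrix (Fin m) (Fin m) ℝ)).mulVec (Rᵀ.mulVec e))
        ≤ frobNorm Z * euclNorm (Rᵀ.mulVec e) := GNB.kron_one_mulVec_le Z _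
      _ ≤ (ρu * frobNorm X / (1 - ρw)) * (ρa * euclNorm e / (1 - ρw)) :=
          mul_le_mul hZfrob hRe (GNB.euclNorm_nonneg _) (by positivity)
      _ = cw * frobNorm X * euclNorm e := by
          rw [hcw]
          generalize (1 - ρw : ℝ) = s
          ring
  · calc euclNorm ((X ⊗ₖ (1 : Matrix (Fin m) (Fin m) ℝ)).mulVec (Rᵀ.mulVec e))
        ≤ frobNorm X * euclNorm (Rᵀ.mulVec e) := GNB.kron_one_mulVec_le X _
      _ ≤ frobNorm X * (ρa * euclNorm e / (1 - ρw)) :=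
          mul_le_mul_of_nonneg_left hRe hXf
      _ = cu * frobNorm X * euclNorm e := by
          rw [hcu]; ring
  · calc euclNorm (Z.mulVec e)
        ≤ frobNorm Z * euclNorm e := GNB.frob_mulVec Z e
      _ ≤ (ρu * frobNorm X / (1 - ρw)) * euclNorm e :=
          mul_le_mul_of_nonneg_right hZfrob hef
      _ = ca * frobNorm X * euclNorm e := by
          rw [hca]; ring


end
end

section
/- Let 0 < σ_w² < 1 and let x₁,…,xₙ ∈ ℝ^d with ‖x_i‖₂ = √d. Let K^{(l)} ∈ ℝ^{n×n} be the population Gram matrices given by K^{(l)}_{ij} = ρ^{(l)} Q(cos θ^{(l)}_{ij}) with ρ^{(l)} = (1 − σ_w^{2l})/(1 − σ_w²), cos θ^{(1)}_{ij} = x_iᵀx_j/d and cos θ^{(l)}_{ij} = (1 − 1/ρ^{(l−1)}) Q(cos θ^{(l−1)}_{ij}) + (1/ρ^{(l−1)}) x_iᵀx_j/d. Then K^{(l)} converges entrywise as l → ∞ to a matrix K whose entries satisfy K_{ij} = Q(cos θ_{ij})/(1 − σ_w²), where cos θ_{ij} ∈ [−1,1] solves cos θ_{ij} = σ_w² Q(cos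 θ_{ij}) + (1 − σ_w²) x_iᵀx_j/d; moreover there exists a constant C > 0 (depending only on σ_w) such that ‖K − K^{(l)}‖_F ≤ C n l σ_w^{2l} for all l ≥ 1. -/
open scoped BigOperators Matrix Kronecker
open MeasureTheory ProbabilityTheory Filter

section QfAux

open Set Real

lemma Qf_continuous : Continuous Qf := by
  unfold Qf
  exact ((Real.continuous_sqrt.comp (by continuity)).add
    ((continuous_const.sub Real.continuous_arccos).mul continuous_id)).div_const _

lemma Qf_hasDerivAt {x : ℝ} (h1 : -1 < x) (h2 : x < 1) :
    HasDerivAt Qf ((Real.pi - Real.arccos x) / Real.pi) x := by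
  have hx2 : (0:ℝ) < 1 - x ^ 2 := by nlinarith
  have hsne : Real.sqrt (1 - x ^ 2) ≠ 0 := by positivity
  have hinner : HasDerivAt (fun y : ℝ => 1 - y ^ 2) (-(2 * x)) x := by
    simpa using (hasDerivAt_pow 2 x).const_sub 1
  have hs : HasDerivAt (fun y : ℝ => Real.sqrt (1 - y ^ 2))
      (1 / (2 * Real.sqrt (1 - x ^ 2)) * (-(2 * x))) x :=
    (Real.hasDerivAt_sqrt hx2.ne').comp x hinner
  have ha : HasDerivAt Real.arccos (-(1 / Real.sqrt (1 - x ^ 2))) x :=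
    Real.hasDerivAt_arccos (by linarith) (by linarith)
  have hm : HasDerivAt (fun y => (Real.pi - Real.arccos y) * y)
      ((0 - -(1 / Real.sqrt (1 - x ^ 2))) * x + (Real.pi - Real.arccos x) * 1) x :=
    ((hasDerivAt_const x Real.pi).sub ha).mul (hasDerivAt_id x)
  have h := (hs.add hm).div_const Real.pi
  exact HasDerivAt.congr_deriv (f := Qf) h (by field_simp; ring)

lemma Qf_deriv_bound (y : ℝ) : ‖(Real.pi - Real.arccos y) / Real.pi‖ ≤ 1 := by
  rw [Real.norm_eq_abs, abs_of_nonneg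
    (div_nonneg (by linarith [Real.arccos_le_pi y]) Real.pi_pos.le),
    div_le_one Real.pi_pos]
  linarith [Real.arccos_nonneg y]

lemma Qf_lip {s t : ℝ} (hs : s ∈ Icc (-1:ℝ) 1) (ht : t ∈ Icc (-1:ℝ) 1) :
    |Qf s - Qf t| ≤ |s - t| := by
  have hd : ∀ y ∈ Ioo (-1:ℝ) 1, HasDerivWithinAt Qf
      ((fun z => (Real.pi - Real.arccos z) / Real.pi) y) (Ioo (-1:ℝ) 1) y :=
    fun y hy => (Qf_hasDerivAt hy.1 hy.2).hasDerivWithinAt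
  have hb : ∀ y ∈ Ioo (-1:ℝ) 1,
      ‖(fun z => (Real.pi - Real.arccos z) / Real.pi) y‖ ≤ 1 :=
    fun y _ => Qf_deriv_bound y
  have hioo : Ioo (-1:ℝ) 1 ×ˢ Ioo (-1:ℝ) 1 ⊆
      {p : ℝ × ℝ | |Qf p.1 - Qf p.2| ≤ |p.1 - p.2|} := by
    rintro ⟨u, v⟩ ⟨hu, hv⟩
    have := (convex_Ioo (-1:ℝ) 1).norm_image_sub_le_of_norm_hasDerivWithin_le hd hb hv hu
    simpa [Real.norm_eq_abs] using this
  have hclosed : IsClosed {p : ℝ × ℝ | |Qf p.1 - Qf p.2| ≤ |p.1 - p.2|} := by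
    apply isClosed_le
    · exact ((Qf_continuous.comp continuous_fst).sub (Qf_continuous.comp continuous_snd)).abs
    · exact (continuous_fst.sub continuous_snd).abs
  have hsub : Icc (-1:ℝ) 1 ×ˢ Icc (-1:ℝ) 1 ⊆
      {p : ℝ × ℝ | |Qf p.1 - Qf p.2| ≤ |p.1 - p.2|} := by
    rw [← closure_Ioo (by norm_num : (-1:ℝ) ≠ 1), ← closure_prod_eq]
    exact hclosed.closure_subset_iff.mpr hioo
  have h2 := hsub (Set.mk_mem_prod hs ht)
  simpa using h2

lemma Qf_mono : MonotoneOn Qf (Icc (-1:ℝ) 1) := by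
  apply monotoneOn_of_deriv_nonneg (convex_Icc _ _) Qf_continuous.continuousOn
  · rw [interior_Icc]
    exact fun y hy => (Qf_hasDerivAt hy.1 hy.2).differentiableAt.differentiableWithinAt
  · rw [interior_Icc]
    intro y hy
    rw [(Qf_hasDerivAt hy.1 hy.2).deriv]
    exact div_nonneg (by linarith [Real.arccos_le_pi y]) Real.pi_pos.le

lemma Qf_neg_one : Qf (-1) = 0 := by
  unfold Qf
  rw [Real.arccos_neg_one]
  norm_num

lemma Qf_one : Qf 1 = 1 := by
  unfold Qf
  rw [Real.arccos_one]
  norm_num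

lemma Qf_mem {t : ℝ} (ht : t ∈ Icc (-1:ℝ) 1) : Qf t ∈ Icc (0:ℝ) 1 := by
  constructor
  · have := Qf_mono (left_mem_Icc.mpr (by norm_num)) ht ht.1
    rwa [Qf_neg_one] at this
  · have := Qf_mono ht (right_mem_Icc.mpr (by norm_num)) ht.2
    rwa [Qf_one] at this

lemma ab_bounds (sw2 : ℝ) (h1 : 0 < sw2) (h2 : sw2 < 1) {u : ℝ} (hu0 : 0 < u) (hus : u ≤ sw2) :
    0 < (1 - sw2) / (1 - u) ∧ (1 - sw2) / (1 - u) ≤ 1 ∧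
    |(1 - (1 - sw2) / (1 - u)) - sw2| ≤ u ∧ |(1 - sw2) / (1 - u) - (1 - sw2)| ≤ u := by
  have h1u : 0 < 1 - u := by linarith
  refine ⟨div_pos (by linarith) h1u, (div_le_one h1u).mpr (by linarith), ?_, ?_⟩
  · have e1 : 1 - (1 - sw2) / (1 - u) - sw2 = -(u * (1 - sw2) / (1 - u)) := by
      field_simp
      ring
    rw [e1, abs_neg, abs_of_nonneg (div_nonneg (mul_nonneg hu0.le (by linarith)) h1u.le),
      div_le_iff₀ h1u]
    nlinarith
  · have e2 : (1 - sw2) / (1 - u) - (1 - sw2) = (1 - sw2) * u / (1 - u) := by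
      field_simp
      ring
    rw [e2, abs_of_nonneg (div_nonneg (mul_nonneg (by linarith) hu0.le) h1u.le), div_le_iff₀ h1u]
    nlinarith

lemma c_bound {n d : ℕ} (x : Fin n → Fin d → ℝ) (hx : ∀ i, euclNorm (x i) = Real.sqrt d)
    (i j : Fin n) : |(∑ k, x i k * x j k) / (d:ℝ)| ≤ 1 := by
  rcases Nat.eq_zero_or_pos d with hd | hd
  · subst hd
    simp
  · have hdp : (0:ℝ) < d := by exact_mod_cast hd
    have hsq : ∀ a : Fin n, ∑ k, (x a k) ^ 2 = (d:ℝ) := by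
      intro a
      have h := hx a
      unfold euclNorm at h
      have h0 : (0:ℝ) ≤ ∑ k, (x a k) ^ 2 := Finset.sum_nonneg fun k _ => sq_nonneg _
      calc ∑ k, (x a k) ^ 2 = Real.sqrt (∑ k, (x a k) ^ 2) ^ 2 := (Real.sq_sqrt h0).symm
        _ = Real.sqrt d ^ 2 := by rw [h]
        _ = d := Real.sq_sqrt hdp.le
    have hcs := Finset.sum_mul_sq_le_sq_mul_sq Finset.univ (x i) (x j)
    rw [hsq i, hsq j] at hcs
    rw [abs_div, abs_of_pos hdp, div_le_one hdp]
    nlinarith [sq_abs (∑ k, x i k * x j k), abs_nonneg (∑ k, x i k * x j k)]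

end QfAux

noncomputable section

/-- the closed-form population Gram matrices `K^{(l)}` converge
entrywise to a matrix `K` with `K_{ij} = Q(cos θ_{ij})/(1 - σ_w²)`, where
`cos θ_{ij}` solves the fixed-point equation, and
`‖K - K^{(l)}‖_F ≤ C n l σ_w^{2l}` for a constant `C` depending only on
`σ_w`. -/
theorem popGram_closed_form_convergence (sw2 : ℝ) (h1 : 0 < sw2) (h2 : sw2 < 1) :
    ∃ C : ℝ, 0 < C ∧
      ∀ (n d : ℕ) (x : Fin n → Fin d → ℝ), (∀ i, euclNorm (x i) = Real.sqrt d) →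
      ∀ c : Fin n → Fin n → ℝ, (∀ i j, c i j = (∑ k, x i k * x j k) / d) →
      ∀ ρ : ℕ → ℝ, (∀ l, ρ l = (1 - sw2 ^ l) / (1 - sw2)) →
      ∀ ct : ℕ → Fin n → Fin n → ℝ,
        (∀ i j, ct 1 i j = c i j) →
        (∀ l, 1 ≤ l → ∀ i j,
          ct (l + 1) i j = (1 - 1 / ρ l) * Qf (ct l i j) + 1 / ρ l * c i j) →
      ∀ Kl : ℕ → Matrix (Fin n) (Fin n) ℝ,
        (∀ l, 1 ≤ l → ∀ i j, Kl l i j = ρ l * Qf (ct l i j)) →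
      ∃ (K : Matrix (Fin n) (Fin n) ℝ) (cθ : Fin n → Fin n → ℝ),
        (∀ i j, cθ i j ∈ Set.Icc (-1 : ℝ) 1 ∧
          cθ i j = sw2 * Qf (cθ i j) + (1 - sw2) * c i j ∧
          K i j = Qf (cθ i j) / (1 - sw2)) ∧
        (∀ i j, Filter.Tendsto (fun l => Kl l i j) Filter.atTop (nhds (K i j))) ∧
        ∀ l : ℕ, 1 ≤ l → frobNorm (K - Kl l) ≤ C * n * l * sw2 ^ l := by
  have hsw2 : (0:ℝ) < 1 - sw2 := by linarith
  set C : ℝ := (2 / sw2 + 1) / (1 - sw2) with hC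
  have hCpos : 0 < C := by positivity
  refine ⟨C, hCpos, ?_⟩
  intro n d x hx c hc ρ hρ ct hct1 hctrec Kl hKl
  -- correlations lie in [-1, 1]
  have hcb : ∀ i j, c i j ∈ Set.Icc (-1:ℝ) 1 := by
    intro i j
    rw [hc i j]
    exact Set.mem_Icc.mpr (abs_le.mp (c_bound x hx i j))
  -- fixed points via IVT
  have hθ : ∀ i j, ∃ t, t ∈ Set.Icc (-1:ℝ) 1 ∧ t = sw2 * Qf t + (1 - sw2) * c i j := by
    intro i j
    have hcont : ContinuousOn (fun t => sw2 * Qf t + (1 - sw2) * c i j - t)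
        (Set.Icc (-1:ℝ) 1) := by
      apply Continuous.continuousOn
      exact ((continuous_const.mul Qf_continuous).add continuous_const).sub continuous_id
    have hmem : (0:ℝ) ∈ Set.Icc ((fun t => sw2 * Qf t + (1 - sw2) * c i j - t) 1)
        ((fun t => sw2 * Qf t + (1 - sw2) * c i j - t) (-1)) := by
      constructor
      · simp only [Qf_one]
        have := (hcb i j).2
        nlinarith
      · simp only [Qf_neg_one]
        have := (hcb i j).1
        nlinarith
    obtain ⟨t, htmem, hteq⟩ := intermediate_value_Icc' (by norm_num : (-1:ℝ) ≤ 1) hcont hmem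
    exact ⟨t, htmem, by simp only at hteq; linarith⟩
  choose cθ hθmem hθeq using hθ
  -- basic power facts
  have hswl : ∀ l : ℕ, 1 ≤ l → sw2 ^ l ≤ sw2 := by
    intro l hl
    calc sw2 ^ l ≤ sw2 ^ 1 := pow_le_pow_of_le_one h1.le h2.le hl
      _ = sw2 := pow_one sw2
  -- membership of the iterates
  have hA : ∀ i j, ∀ m : ℕ, ct (m + 1) i j ∈ Set.Icc (-1:ℝ) 1 := by
    intro i j m
    induction m with
    | zero => rw [hct1]; exact hcb i j
    | succ m ih =>
      rw [hctrec (m + 1) (Nat.le_add_left 1 m) i j, hρ (m + 1), one_div_div]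
      obtain ⟨hb0, hb1, -, -⟩ := ab_bounds sw2 h1 h2 (pow_pos h1 (m + 1)) (hswl (m + 1) (Nat.le_add_left 1 m))
      have hQ := Qf_mem ih
      have hcij := hcb i j
      constructor
      · nlinarith [hQ.1, hQ.2, hcij.1, hcij.2]
      · nlinarith [hQ.1, hQ.2, hcij.1, hcij.2]
  -- error recursion
  have hB : ∀ i j, ∀ m : ℕ, |ct (m + 1) i j - cθ i j| ≤ 2 * ((m:ℝ) + 1) * sw2 ^ m := by
    intro i j m
    induction m with
    | zero =>
      rw [hct1]
      have hcij := hcb i j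
      have hth := hθmem i j
      rw [abs_le]
      norm_num
      constructor <;> nlinarith [hcij.1, hcij.2, hth.1, hth.2]
    | succ m ih =>
      rw [hctrec (m + 1) (Nat.le_add_left 1 m) i j, hρ (m + 1), one_div_div]
      set b := (1 - sw2) / (1 - sw2 ^ (m + 1)) with hbdef
      obtain ⟨hb0, hb1, hA1, hA2⟩ := ab_bounds sw2 h1 h2 (pow_pos h1 (m + 1)) (hswl (m + 1) (Nat.le_add_left 1 m))
      have hfix := hθeq i j
      have key : (1 - b) * Qf (ct (m + 1) i j) + b * c i j - cθ i j
          = sw2 * (Qf (ct (m + 1) i j) - Qf (cθ i j))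
            + ((1 - b) - sw2) * Qf (ct (m + 1) i j) + (b - (1 - sw2)) * c i j := by
        linear_combination -hfix
      rw [key]
      have htri := abs_add_three (sw2 * (Qf (ct (m + 1) i j) - Qf (cθ i j)))
        (((1 - b) - sw2) * Qf (ct (m + 1) i j)) ((b - (1 - sw2)) * c i j)
      have hQb : |Qf (ct (m + 1) i j)| ≤ 1 := by
        have := Qf_mem (hA i j m)
        rw [abs_le]
        exact ⟨by linarith [this.1], this.2⟩
      have hcbij : |c i j| ≤ 1 := abs_le.mpr (Set.mem_Icc.mp (hcb i j))
      have hlipQ : |Qf (ct (m + 1) i j) - Qf (cθ i j)| ≤ |ct (m + 1) i j - cθ i j| :=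
        Qf_lip (hA i j m) (hθmem i j)
      have e1 : |sw2 * (Qf (ct (m + 1) i j) - Qf (cθ i j))| ≤ sw2 * (2 * ((m:ℝ) + 1) * sw2 ^ m) := by
        rw [abs_mul, abs_of_pos h1]
        exact mul_le_mul_of_nonneg_left (hlipQ.trans ih) h1.le
      have e2 : |((1 - b) - sw2) * Qf (ct (m + 1) i j)| ≤ sw2 ^ (m + 1) := by
        rw [abs_mul]
        calc |(1 - b) - sw2| * |Qf (ct (m + 1) i j)| ≤ sw2 ^ (m + 1) * 1 :=
          mul_le_mul hA1 hQb (abs_nonneg _) (by positivity)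
        _ = sw2 ^ (m + 1) := mul_one _
      have e3 : |(b - (1 - sw2)) * c i j| ≤ sw2 ^ (m + 1) := by
        rw [abs_mul]
        calc |b - (1 - sw2)| * |c i j| ≤ sw2 ^ (m + 1) * 1 :=
          mul_le_mul hA2 hcbij (abs_nonneg _) (by positivity)
        _ = sw2 ^ (m + 1) := mul_one _
      have hpow : sw2 ^ (m + 1) = sw2 ^ m * sw2 := pow_succ sw2 m
      push_cast
      nlinarith [pow_pos h1 m, pow_pos h1 (m + 1)]
  -- the limit matrix
  -- entrywise bound
  have hentry : ∀ l, 1 ≤ l → ∀ i j,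
      |Qf (cθ i j) / (1 - sw2) - Kl l i j| ≤ C * l * sw2 ^ l := by
    intro l hl i j
    obtain ⟨m, rfl⟩ : ∃ m, l = m + 1 := ⟨l - 1, by omega⟩
    rw [hKl (m + 1) hl i j, hρ (m + 1)]
    have hQc : |Qf (ct (m + 1) i j)| ≤ 1 := by
      have := Qf_mem (hA i j m)
      rw [abs_le]
      exact ⟨by linarith [this.1], this.2⟩
    have e : Qf (cθ i j) / (1 - sw2)
        - (1 - sw2 ^ (m + 1)) / (1 - sw2) * Qf (ct (m + 1) i j)
        = ((Qf (cθ i j) - Qf (ct (m + 1) i j)) + sw2 ^ (m + 1) * Qf (ct (m + 1) i j))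
          / (1 - sw2) := by
      field_simp
      ring
    rw [e, abs_div, abs_of_pos hsw2, div_le_iff₀ hsw2]
    have t1 : |Qf (cθ i j) - Qf (ct (m + 1) i j)| ≤ 2 * ((m:ℝ) + 1) * sw2 ^ m := by
      rw [abs_sub_comm]
      exact (Qf_lip (hA i j m) (hθmem i j)).trans (hB i j m)
    have t2 : |sw2 ^ (m + 1) * Qf (ct (m + 1) i j)| ≤ sw2 ^ (m + 1) := by
      rw [abs_mul, abs_of_pos (pow_pos h1 (m + 1))]
      calc sw2 ^ (m + 1) * |Qf (ct (m + 1) i j)| ≤ sw2 ^ (m + 1) * 1 :=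
        mul_le_mul_of_nonneg_left hQc (pow_pos h1 (m + 1)).le
      _ = sw2 ^ (m + 1) := mul_one _
    have htri := abs_add_le (Qf (cθ i j) - Qf (ct (m + 1) i j))
      (sw2 ^ (m + 1) * Qf (ct (m + 1) i j))
    have hCm : C * (1 - sw2) = 2 / sw2 + 1 := div_mul_cancel₀ _ hsw2.ne'
    have h2s : 2 / sw2 * sw2 ^ (m + 1) = 2 * sw2 ^ m := by
      rw [pow_succ]
      field_simp
    have hm0 : (0:ℝ) ≤ (m:ℝ) := Nat.cast_nonneg m
    push_cast
    nlinarith [pow_pos h1 m, pow_pos h1 (m + 1),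
      mul_nonneg hm0 (pow_pos h1 (m + 1)).le]
  -- the limit matrix
  refine ⟨Matrix.of fun i j => Qf (cθ i j) / (1 - sw2), cθ,
    fun i j => ⟨hθmem i j, hθeq i j, rfl⟩, ?_, ?_⟩
  · -- entrywise convergence
    intro i j
    have hgeo := tendsto_self_mul_const_pow_of_lt_one h1.le h2
    have hg2 : Filter.Tendsto (fun l : ℕ => C * ((l:ℝ) * sw2 ^ l))
        Filter.atTop (nhds 0) := by
      simpa using hgeo.const_mul C
    have hz : Filter.Tendsto
        (fun l => Kl l i j - Qf (cθ i j) / (1 - sw2)) Filter.atTop (nhds 0) := by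
      apply squeeze_zero_norm' _ hg2
      filter_upwards [eventually_ge_atTop 1] with l hl
      rw [Real.norm_eq_abs, abs_sub_comm]
      calc |Qf (cθ i j) / (1 - sw2) - Kl l i j| ≤ C * l * sw2 ^ l := hentry l hl i j
        _ = C * ((l:ℝ) * sw2 ^ l) := by ring
    have hfin := hz.add_const (Qf (cθ i j) / (1 - sw2))
    simp only [sub_add_cancel, zero_add] at hfin
    simpa using hfin
  · -- Frobenius norm bound
    intro l hl
    set M := C * l * sw2 ^ l with hM
    have hM0 : (0:ℝ) ≤ M := by positivity
    have hterm : ∀ i' j',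
        (((Matrix.of fun i j => Qf (cθ i j) / (1 - sw2)) - Kl l) i' j') ^ 2 ≤ M ^ 2 := by
      intro i' j'
      have habs : |((Matrix.of fun i j => Qf (cθ i j) / (1 - sw2)) - Kl l) i' j'| ≤ M := by
        rw [Matrix.sub_apply, Matrix.of_apply]
        exact hentry l hl i' j'
      calc (((Matrix.of fun i j => Qf (cθ i j) / (1 - sw2)) - Kl l) i' j') ^ 2
          = |((Matrix.of fun i j => Qf (cθ i j) / (1 - sw2)) - Kl l) i' j'| ^ 2 :=
            (sq_abs _).symm
        _ ≤ M ^ 2 := pow_le_pow_left₀ (abs_nonneg _) habs 2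
    have hsum : ∑ i', ∑ j',
        (((Matrix.of fun i j => Qf (cθ i j) / (1 - sw2)) - Kl l) i' j') ^ 2
        ≤ ((n:ℝ) * M) ^ 2 := by
      calc ∑ i', ∑ j',
          (((Matrix.of fun i j => Qf (cθ i j) / (1 - sw2)) - Kl l) i' j') ^ 2
          ≤ ∑ _i' : Fin n, ∑ _j' : Fin n, M ^ 2 :=
            Finset.sum_le_sum fun i' _ => Finset.sum_le_sum fun j' _ => hterm i' j'
        _ = (n:ℝ) * ((n:ℝ) * M ^ 2) := by
            simp [Finset.sum_const, Finset.card_univ, nsmul_eq_mul]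
        _ = ((n:ℝ) * M) ^ 2 := by ring
    unfold frobNorm
    calc Real.sqrt (∑ i', ∑ j',
          (((Matrix.of fun i j => Qf (cθ i j) / (1 - sw2)) - Kl l) i' j') ^ 2)
        ≤ Real.sqrt (((n:ℝ) * M) ^ 2) := Real.sqrt_le_sqrt hsum
      _ = (n:ℝ) * M := Real.sqrt_sq (by positivity)
      _ = C * n * l * sw2 ^ l := by rw [hM]; ring


end
end
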